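/- There exists a constant C > 0 depending only on d such that for every s > 0 and every m ∈ ℤ^d with |m| ≤ s/100, the free discrete Schrödinger kernel satisfies |K_d(s, m)| ≤ C s^{−d/2}. -/

import Mathlib

open MeasureTheory

noncomputable section

/-- Euclidean norm of a lattice point. -/
def znorm {d : ℕ} (n : Fin d → ℤ) : ℝ := Real.sqrt (∑ i, ((n i : ℝ)) ^ 2)

/-- The kernel `K_d(s, m) = (2π)^{-d} ∫_{[-π,π]^d} exp(-2is ∑_j cos ξ_j - i m·ξ) dξ`
of the free discrete Schrödinger propagator `e^{-isH0}` on `ℓ²(ℤ^d)`. -/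
def freeKernel (d : ℕ) (s : ℝ) (m : Fin d → ℤ) : ℂ :=
  ((2 * Real.pi) ^ d)⁻¹ •
    ∫ ξ in Set.univ.pi fun _ : Fin d => Set.Icc (-Real.pi) Real.pi,
      Complex.exp (-Complex.I *
        ((2 * s * ∑ j, Real.cos (ξ j) + ∑ j, (m j : ℝ) * ξ j : ℝ) : ℂ))

open Set intervalIntegral


lemma ibp_bound (f f' f'' : ℝ → ℝ) (a b L : ℝ) (hab : a ≤ b) (hL : 0 < L)
    (hder : ∀ x, HasDerivAt f (f' x) x)
    (hder2 : ∀ x, HasDerivAt f' (f'' x) x)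
    (hc2 : Continuous f'')
    (hlow : ∀ x ∈ Set.Icc a b, L ≤ |f' x|)
    (hsgn : (∀ x ∈ Set.Icc a b, 0 ≤ f'' x) ∨ (∀ x ∈ Set.Icc a b, f'' x ≤ 0)) :
    ‖∫ x in a..b, Complex.exp (-Complex.I * (f x : ℂ))‖ ≤ 4 / L := by
  have huIcc : Set.uIcc a b = Set.Icc a b := Set.uIcc_of_le hab
  have hne : ∀ x ∈ Set.Icc a b, f' x ≠ 0 := by
    intro x hx
    have := hlow x hx
    intro h; rw [h] at this; simp at this; linarith
  have hcf : Continuous f := by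
    rw [continuous_iff_continuousAt]; exact fun x => (hder x).continuousAt
  have hcf' : Continuous f' := by
    rw [continuous_iff_continuousAt]; exact fun x => (hder2 x).continuousAt
  set E : ℝ → ℂ := fun x => Complex.exp (-Complex.I * (f x : ℂ)) with hE
  have hcE : Continuous E := by
    apply Complex.continuous_exp.comp
    exact (continuous_const.mul (Complex.continuous_ofReal.comp hcf))
  have hEabs : ∀ x, ‖E x‖ = 1 := by
    intro x
    rw [hE]; simp [Complex.norm_exp]
  -- the antiderivative
  set g : ℝ → ℂ := fun x => Complex.I * E x / (f' x : ℂ) with hg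
  set D : ℝ → ℂ := fun x => E x - Complex.I * E x * ((f'' x / (f' x) ^ 2 : ℝ) : ℂ) with hD
  have hgder : ∀ x ∈ Set.uIcc a b, HasDerivAt g (D x) x := by
    intro x hx
    rw [huIcc] at hx
    have hfx : (f' x : ℂ) ≠ 0 := by
      exact_mod_cast Complex.ofReal_ne_zero.mpr (hne x hx)
    have h1 : HasDerivAt (fun y => (f y : ℂ)) (f' x) x := (hder x).ofReal_comp
    have h2 : HasDerivAt (fun y => -Complex.I * (f y : ℂ)) (-Complex.I * f' x) x :=
      h1.const_mul _
    have h3 : HasDerivAt (fun y => Complex.exp (-Complex.I * (f y : ℂ)))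
        (Complex.exp (-Complex.I * (f x : ℂ)) * (-Complex.I * f' x)) x := h2.cexp
    have h4 : HasDerivAt (fun y => Complex.I * E y)
        (Complex.I * (E x * (-Complex.I * f' x))) x := h3.const_mul _
    have h5 : HasDerivAt (fun y => ((f' y : ℝ) : ℂ)) (f'' x) x := (hder2 x).ofReal_comp
    have h6 := h4.div h5 hfx
    refine h6.congr_deriv ?_; symm
    rw [hD]
    field_simp
    ring_nf
    simp [Complex.I_sq]
    field_simp
  set c : ℝ → ℝ := fun x => f'' x / f' x ^ 2 with hc
  have hccont : ContinuousOn c (Set.Icc a b) :=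
    hc2.continuousOn.div ((hcf'.pow 2).continuousOn)
      (fun x hx => pow_ne_zero 2 (hne x hx))
  have hcCcont : ContinuousOn (fun x => ((c x : ℝ) : ℂ)) (Set.Icc a b) :=
    Complex.continuous_ofReal.comp_continuousOn hccont
  have hDcont : ContinuousOn D (Set.Icc a b) := by
    apply (hcE.continuousOn).sub
    exact (continuous_const.continuousOn.mul hcE.continuousOn).mul hcCcont
  have hDint : IntervalIntegrable D volume a b := by
    apply ContinuousOn.intervalIntegrable; rwa [huIcc]
  have hftc : ∫ x in a..b, D x = g b - g a :=
    intervalIntegral.integral_eq_sub_of_hasDerivAt hgder hDint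
  have hEint : IntervalIntegrable E volume a b := hcE.intervalIntegrable a b
  have hprodint : IntervalIntegrable (fun x => Complex.I * E x * ((c x : ℝ) : ℂ)) volume a b := by
    apply ContinuousOn.intervalIntegrable
    rw [huIcc]
    exact (continuous_const.continuousOn.mul hcE.continuousOn).mul hcCcont
  have hsplit : ∫ x in a..b, D x
      = (∫ x in a..b, E x) - Complex.I * ∫ x in a..b, (E x * ((c x : ℝ) : ℂ)) := by
    rw [hD]
    rw [intervalIntegral.integral_sub hEint hprodint]
    congr 1
    rw [← intervalIntegral.integral_const_mul]
    congr 1; ext x; ring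
  have hmain : ∫ x in a..b, E x
      = (g b - g a) + Complex.I * ∫ x in a..b, (E x * ((c x : ℝ) : ℂ)) := by
    rw [← hftc, hsplit]; ring
  -- bound on g
  have hgabs : ∀ x ∈ Set.Icc a b, ‖g x‖ ≤ 1 / L := by
    intro x hx
    rw [hg]
    simp only [norm_div, norm_mul, Complex.norm_I, hEabs, Complex.norm_real, Real.norm_eq_abs, one_mul]
    rw [div_le_div_iff₀ (lt_of_lt_of_le hL (hlow x hx)) hL]
    have := hlow x hx; nlinarith
  -- bound on the second integral
  have habs2 : ‖∫ x in a..b, (E x * ((c x : ℝ) : ℂ))‖ ≤ ∫ x in a..b, |c x| := by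
    have h1 := intervalIntegral.norm_integral_le_integral_norm
      (f := fun x => E x * ((c x : ℝ) : ℂ)) (μ := volume) hab
    have h2 : (∫ x in a..b, ‖E x * ((c x : ℝ) : ℂ)‖) = ∫ x in a..b, |c x| := by
      congr 1; ext x
      simp [norm_mul, hEabs, Complex.norm_real]
    rw [h2] at h1
    exact h1
  -- FTC for c
  set h : ℝ → ℝ := fun x => -(f' x)⁻¹ with hh
  have hhder : ∀ x ∈ Set.uIcc a b, HasDerivAt h (c x) x := by
    intro x hx
    rw [huIcc] at hx
    have := ((hder2 x).inv (hne x hx)).neg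
    refine this.congr_deriv ?_; symm
    rw [hc]; field_simp
  have hcint : IntervalIntegrable c volume a b := by
    apply ContinuousOn.intervalIntegrable; rwa [huIcc]
  have hftc2 : ∫ x in a..b, c x = (f' a)⁻¹ - (f' b)⁻¹ := by
    rw [intervalIntegral.integral_eq_sub_of_hasDerivAt hhder hcint]
    rw [hh]; ring
  have hinvL : ∀ x ∈ Set.Icc a b, |(f' x)⁻¹| ≤ 1 / L := by
    intro x hx
    rw [abs_inv, ← one_div]
    exact one_div_le_one_div_of_le hL (hlow x hx)
  have hintc : ∫ x in a..b, |c x| ≤ 2 / L := by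
    have h1 := hinvL a ⟨le_rfl, hab⟩
    have h2 := hinvL b ⟨hab, le_rfl⟩
    have e2 : (2:ℝ) / L = 1/L + 1/L := by ring
    rcases hsgn with hpos | hneg
    · have heq : Set.EqOn (fun x => |c x|) c (Set.uIcc a b) := by
        intro x hx; rw [huIcc] at hx
        simp only
        exact abs_of_nonneg (div_nonneg (hpos x hx) (sq_nonneg _))
      rw [intervalIntegral.integral_congr heq, hftc2, e2]
      have := le_abs_self ((f' a)⁻¹)
      have := neg_abs_le ((f' b)⁻¹)
      linarith
    · have heq : Set.EqOn (fun x => |c x|) (fun x => -(c x)) (Set.uIcc a b) := by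
        intro x hx; rw [huIcc] at hx
        simp only
        exact abs_of_nonpos (div_nonpos_of_nonpos_of_nonneg (hneg x hx) (sq_nonneg _))
      rw [intervalIntegral.integral_congr heq, intervalIntegral.integral_neg, hftc2, e2]
      have := le_abs_self ((f' b)⁻¹)
      have := neg_abs_le ((f' a)⁻¹)
      linarith
  have habs2' : ‖∫ x in a..b, (E x * ((c x : ℝ) : ℂ))‖ ≤ 2 / L :=
    le_trans habs2 hintc
  calc ‖∫ x in a..b, E x‖
      = ‖(g b - g a) + Complex.I * ∫ x in a..b, (E x * ((c x : ℝ) : ℂ))‖ := by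
        rw [hmain]
    _ ≤ ‖g b - g a‖
        + ‖Complex.I * ∫ x in a..b, (E x * ((c x : ℝ) : ℂ))‖ :=
        norm_add_le _ _
    _ ≤ (‖g b‖ + ‖g a‖)
        + ‖∫ x in a..b, (E x * ((c x : ℝ) : ℂ))‖ := by
        rw [norm_mul, Complex.norm_I, one_mul]
        exact add_le_add (norm_sub_le (g b) (g a)) le_rfl
    _ ≤ (1/L + 1/L) + 2/L := by
        have := hgabs b ⟨hab, le_rfl⟩
        have := hgabs a ⟨le_rfl, hab⟩
        linarith
    _ = 4 / L := by ring

lemma sin_sub_half {u v : ℝ} (huv : u ≤ v) (hu : |u| ≤ Real.pi/3) (hv : |v| ≤ Real.pi/3) :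
    (v - u) / 2 ≤ Real.sin v - Real.sin u := by
  rcases eq_or_lt_of_le huv with rfl | h
  · simp
  · obtain ⟨c, hc, hceq⟩ := exists_hasDerivAt_eq_slope Real.sin Real.cos h
      Real.continuous_sin.continuousOn (fun x _ => Real.hasDerivAt_sin x)
    have hcb : |c| ≤ Real.pi/3 := by
      rw [abs_le] at hu hv ⊢
      constructor <;> [linarith [hc.1]; linarith [hc.2]]
    have hcos : (1:ℝ)/2 ≤ Real.cos c := by
      rw [← Real.cos_abs c, ← Real.cos_pi_div_three]
      apply Real.cos_le_cos_of_nonneg_of_le_pi (abs_nonneg c) _ hcb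
      linarith [Real.pi_pos]
    have hvu : (0:ℝ) < v - u := sub_pos.mpr h
    rw [eq_div_iff (ne_of_gt hvu)] at hceq
    nlinarith

def ph (s : ℝ) (m : ℤ) (x : ℝ) : ℝ := 2*s*Real.cos x + m*x
def ph' (s : ℝ) (m : ℤ) (x : ℝ) : ℝ := m - 2*s*Real.sin x
def ph'' (s : ℝ) (m : ℤ) (x : ℝ) : ℝ := -(2*s*Real.cos x)

lemma hasDerivAt_ph (s : ℝ) (m : ℤ) (x : ℝ) : HasDerivAt (ph s m) (ph' s m x) x := by
  have h1 := (Real.hasDerivAt_cos x).const_mul (2*s)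
  have h2 := (hasDerivAt_id x).const_mul (m:ℝ)
  have := h1.add h2
  have e : ph' s m x = 2*s*(-Real.sin x) + (m:ℝ)*1 := by simp [ph']; ring
  rw [e]; exact this

lemma hasDerivAt_ph' (s : ℝ) (m : ℤ) (x : ℝ) : HasDerivAt (ph' s m) (ph'' s m x) x := by
  have h1 := ((Real.hasDerivAt_sin x).const_mul (2*s)).const_sub (m:ℝ)
  exact h1

lemma cont_ph'' (s : ℝ) (m : ℤ) : Continuous (ph'' s m) := by
  unfold ph''; fun_prop

lemma cont_F (s : ℝ) (m : ℤ) :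
    Continuous (fun x => Complex.exp (-Complex.I * (ph s m x : ℂ))) := by
  apply Complex.continuous_exp.comp
  apply continuous_const.mul
  apply Complex.continuous_ofReal.comp
  unfold ph; fun_prop

lemma triv_bound (s : ℝ) (m : ℤ) {a b : ℝ} (hab : a ≤ b) :
    ‖∫ x in a..b, Complex.exp (-Complex.I * (ph s m x : ℂ))‖ ≤ b - a := by
  have h : ∀ x ∈ Set.uIoc a b, ‖Complex.exp (-Complex.I * (ph s m x : ℂ))‖ ≤ 1 := by
    intro x _
    simp [Complex.norm_exp]
  have h2 := intervalIntegral.norm_integral_le_of_norm_le_const h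
  rw [abs_of_nonneg (by linarith : (0:ℝ) ≤ b - a)] at h2
  simpa using h2


section Pieces

variable {s δ A x₀ : ℝ} {m : ℤ}

lemma pieceP1 (hs0 : 0 < s) (hδpos : 0 < δ) (hδ : δ ≤ 1/100)
    (h2sA : 2*s*A = (m:ℝ)) (hx₀0 : 0 ≤ x₀) (hx₀ : x₀ ≤ 0.01)
    (hsml : Real.sin (x₀ - δ) ≤ A - δ/2) :
    ‖∫ x in (x₀ - Real.pi/2)..(x₀ - δ),
      Complex.exp (-Complex.I * (ph s m x : ℂ))‖ ≤ 4/(s*δ) := by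
  have hπ := Real.pi_gt_three
  have hmono := Real.strictMonoOn_sin.monotoneOn
  have hLpos : 0 < s*δ := by positivity
  apply ibp_bound (ph s m) (ph' s m) (ph'' s m) _ _ (s*δ) (by linarith) hLpos
    (hasDerivAt_ph s m) (hasDerivAt_ph' s m) (cont_ph'' s m)
  · intro x hx
    obtain ⟨hx1, hx2⟩ := hx
    have hsle : Real.sin x ≤ Real.sin (x₀ - δ) :=
      hmono ⟨by linarith, by linarith⟩ ⟨by linarith, by linarith⟩ hx2
    have h1 : s*δ ≤ ph' s m x := by
      unfold ph'; rw [← h2sA]; nlinarith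
    exact le_trans h1 (le_abs_self _)
  · right
    intro x hx
    obtain ⟨hx1, hx2⟩ := hx
    have : 0 ≤ Real.cos x := Real.cos_nonneg_of_mem_Icc ⟨by linarith, by linarith⟩
    unfold ph''; nlinarith

lemma pieceP2 (hs0 : 0 < s) (hδpos : 0 < δ) (hδ : δ ≤ 1/100)
    (h2sA : 2*s*A = (m:ℝ)) (hx₀0 : 0 ≤ x₀) (hx₀ : x₀ ≤ 0.01)
    (hbig : A + δ/2 ≤ Real.sin (x₀ + δ)) :
    ‖∫ x in (x₀ + δ)..(Real.pi/2),
      Complex.exp (-Complex.I * (ph s m x : ℂ))‖ ≤ 4/(s*δ) := by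
  have hπ := Real.pi_gt_three
  have hmono := Real.strictMonoOn_sin.monotoneOn
  have hLpos : 0 < s*δ := by positivity
  apply ibp_bound (ph s m) (ph' s m) (ph'' s m) _ _ (s*δ) (by linarith) hLpos
    (hasDerivAt_ph s m) (hasDerivAt_ph' s m) (cont_ph'' s m)
  · intro x hx
    obtain ⟨hx1, hx2⟩ := hx
    have hsle : Real.sin (x₀ + δ) ≤ Real.sin x :=
      hmono ⟨by linarith, by linarith⟩ ⟨by linarith, by linarith⟩ hx1
    have h1 : s*δ ≤ -(ph' s m x) := by
      unfold ph'; rw [← h2sA]; nlinarith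
    exact le_trans h1 (neg_le_abs _)
  · right
    intro x hx
    obtain ⟨hx1, hx2⟩ := hx
    have : 0 ≤ Real.cos x := Real.cos_nonneg_of_mem_Icc ⟨by linarith, by linarith⟩
    unfold ph''; nlinarith

lemma pieceP3 (hs0 : 0 < s) (hδpos : 0 < δ) (hδ : δ ≤ 1/100)
    (h2sA : 2*s*A = (m:ℝ)) (hx₀0 : 0 ≤ x₀) (hx₀ : x₀ ≤ 0.01)
    (hbig : A + δ/2 ≤ Real.sin (x₀ + δ)) :
    ‖∫ x in (Real.pi/2)..(Real.pi - x₀ - δ),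
      Complex.exp (-Complex.I * (ph s m x : ℂ))‖ ≤ 4/(s*δ) := by
  have hπ := Real.pi_gt_three
  have hmono := Real.strictMonoOn_sin.monotoneOn
  have hLpos : 0 < s*δ := by positivity
  apply ibp_bound (ph s m) (ph' s m) (ph'' s m) _ _ (s*δ) (by linarith) hLpos
    (hasDerivAt_ph s m) (hasDerivAt_ph' s m) (cont_ph'' s m)
  · intro x hx
    obtain ⟨hx1, hx2⟩ := hx
    have hsle : Real.sin (x₀ + δ) ≤ Real.sin (Real.pi - x) :=
      hmono ⟨by linarith, by linarith⟩ ⟨by linarith, by linarith⟩ (by linarith)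
    rw [Real.sin_pi_sub] at hsle
    have h1 : s*δ ≤ -(ph' s m x) := by
      unfold ph'; rw [← h2sA]; nlinarith
    exact le_trans h1 (neg_le_abs _)
  · left
    intro x hx
    obtain ⟨hx1, hx2⟩ := hx
    have : Real.cos x ≤ 0 :=
      Real.cos_nonpos_of_pi_div_two_le_of_le (by linarith) (by linarith)
    unfold ph''; nlinarith

lemma pieceP4 (hs0 : 0 < s) (hδpos : 0 < δ) (hδ : δ ≤ 1/100)
    (h2sA : 2*s*A = (m:ℝ)) (hx₀0 : 0 ≤ x₀) (hx₀ : x₀ ≤ 0.01)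
    (hsml : Real.sin (x₀ - δ) ≤ A - δ/2) :
    ‖∫ x in (Real.pi - x₀ + δ)..(3*Real.pi/2),
      Complex.exp (-Complex.I * (ph s m x : ℂ))‖ ≤ 4/(s*δ) := by
  have hπ := Real.pi_gt_three
  have hmono := Real.strictMonoOn_sin.monotoneOn
  have hLpos : 0 < s*δ := by positivity
  apply ibp_bound (ph s m) (ph' s m) (ph'' s m) _ _ (s*δ) (by linarith) hLpos
    (hasDerivAt_ph s m) (hasDerivAt_ph' s m) (cont_ph'' s m)
  · intro x hx
    obtain ⟨hx1, hx2⟩ := hx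
    have hsle : Real.sin (Real.pi - x) ≤ Real.sin (x₀ - δ) :=
      hmono ⟨by linarith, by linarith⟩ ⟨by linarith, by linarith⟩ (by linarith)
    rw [Real.sin_pi_sub] at hsle
    have h1 : s*δ ≤ ph' s m x := by
      unfold ph'; rw [← h2sA]; nlinarith
    exact le_trans h1 (le_abs_self _)
  · left
    intro x hx
    obtain ⟨hx1, hx2⟩ := hx
    have : Real.cos x ≤ 0 :=
      Real.cos_nonpos_of_pi_div_two_le_of_le (by linarith) (by linarith)
    unfold ph''; nlinarith

lemma pieceP5 (hs0 : 0 < s) (hA0 : 0 ≤ A)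
    (h2sA : 2*s*A = (m:ℝ)) (hx₀0 : 0 ≤ x₀) (hx₀ : x₀ ≤ 0.01)
    (hcosx₀ : (1:ℝ)/2 ≤ Real.cos x₀) :
    ‖∫ x in (3*Real.pi/2)..(x₀ + 3*Real.pi/2),
      Complex.exp (-Complex.I * (ph s m x : ℂ))‖ ≤ 4/s := by
  have hπ := Real.pi_gt_three
  have hmono := Real.strictMonoOn_sin.monotoneOn
  apply ibp_bound (ph s m) (ph' s m) (ph'' s m) _ _ s (by linarith) hs0
    (hasDerivAt_ph s m) (hasDerivAt_ph' s m) (cont_ph'' s m)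
  · intro x hx
    obtain ⟨hx1, hx2⟩ := hx
    have hsle : Real.sin (x - 2*Real.pi) ≤ Real.sin (x₀ - Real.pi/2) :=
      hmono ⟨by linarith, by linarith⟩ ⟨by linarith, by linarith⟩ (by linarith)
    rw [Real.sin_sub_two_pi, Real.sin_sub_pi_div_two] at hsle
    have h1 : s ≤ ph' s m x := by
      unfold ph'; rw [← h2sA]; nlinarith
    exact le_trans h1 (le_abs_self _)
  · right
    intro x hx
    obtain ⟨hx1, hx2⟩ := hx
    have h1 : 0 ≤ Real.cos (x - 2*Real.pi) :=
      Real.cos_nonneg_of_mem_Icc ⟨by linarith, by linarith⟩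
    rw [Real.cos_sub_two_pi] at h1
    unfold ph''; nlinarith

end Pieces

lemma oneD_tail (s : ℝ) (hs : (10000:ℝ) ≤ s) :
    4/(s*(Real.sqrt s)⁻¹) + (2*(Real.sqrt s)⁻¹ + (4/(s*(Real.sqrt s)⁻¹)
      + (4/(s*(Real.sqrt s)⁻¹) + (2*(Real.sqrt s)⁻¹ + (4/(s*(Real.sqrt s)⁻¹) + 4/s)))))
      ≤ 25 / Real.sqrt s := by
  have hs0 : (0:ℝ) < s := by linarith
  have hupos : (0:ℝ) < Real.sqrt s := Real.sqrt_pos.mpr hs0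
  have huu : Real.sqrt s * Real.sqrt s = s := Real.mul_self_sqrt hs0.le
  have hu : (100:ℝ) ≤ Real.sqrt s := by
    have h1 : Real.sqrt 10000 ≤ Real.sqrt s := Real.sqrt_le_sqrt hs
    have h2 : Real.sqrt 10000 = 100 := by
      rw [show (10000:ℝ) = 100^2 by norm_num, Real.sqrt_sq (by norm_num : (0:ℝ) ≤ 100)]
    linarith
  set u : ℝ := Real.sqrt s with hudef
  have hsu : s * u⁻¹ = u := by field_simp; linarith [huu]
  rw [hsu, ← huu]
  have e : 4/u + (2*u⁻¹ + (4/u + (4/u + (2*u⁻¹ + (4/u + 4/(u*u)))))) = 20/u + 4/(u*u) := by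
    rw [inv_eq_one_div]; ring
  rw [e]
  have h5 : 4/(u*u) ≤ 5/u := by
    rw [div_le_div_iff₀ (by positivity) hupos]; nlinarith
  have e2 : (25:ℝ)/u = 20/u + 5/u := by ring
  rw [e2]
  linarith

lemma oneD_nonneg (s : ℝ) (hs : (10000:ℝ) ≤ s) (m : ℤ) (hm0 : 0 ≤ m) (hm : (m:ℝ) ≤ s/100) :
    ‖∫ x in (-Real.pi)..Real.pi, Complex.exp (-Complex.I * (ph s m x : ℂ))‖
      ≤ 25 / Real.sqrt s := by
  have hπ := Real.pi_gt_three
  have hs0 : (0:ℝ) < s := by linarith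
  have hsqpos : (0:ℝ) < Real.sqrt s := Real.sqrt_pos.mpr hs0
  have hsqrt : (100:ℝ) ≤ Real.sqrt s := by
    have h1 : Real.sqrt 10000 ≤ Real.sqrt s := Real.sqrt_le_sqrt hs
    have h2 : Real.sqrt 10000 = 100 := by
      rw [show (10000:ℝ) = 100^2 by norm_num, Real.sqrt_sq (by norm_num : (0:ℝ) ≤ 100)]
    linarith
  set δ : ℝ := (Real.sqrt s)⁻¹ with hδdef
  have hδpos : 0 < δ := inv_pos.mpr hsqpos
  have hδ : δ ≤ 1/100 := by
    rw [hδdef, show (1:ℝ)/100 = (100:ℝ)⁻¹ by norm_num]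
    exact inv_anti₀ (by norm_num) hsqrt
  have hsδ : s * δ = Real.sqrt s := by rw [hδdef]; field_simp; rw [Real.sq_sqrt hs0.le]
  set A : ℝ := (m:ℝ)/(2*s) with hAdef
  have hm0' : (0:ℝ) ≤ (m:ℝ) := by exact_mod_cast hm0
  have hA0 : 0 ≤ A := div_nonneg hm0' (by linarith)
  have hA : A ≤ 1/200 := by
    rw [hAdef, div_le_iff₀ (by linarith : (0:ℝ) < 2*s)]; linarith
  have h2sA : 2*s*A = (m:ℝ) := by rw [hAdef]; field_simp
  set x₀ : ℝ := Real.arcsin A with hx₀def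
  have hsinx₀ : Real.sin x₀ = A := Real.sin_arcsin (by linarith) (by linarith)
  have hx₀0 : 0 ≤ x₀ := Real.arcsin_nonneg.mpr hA0
  have hx₀ : x₀ ≤ 0.01 := by
    by_contra hcon
    push_neg at hcon
    have h1 : Real.sin 0.01 < Real.sin x₀ := by
      apply Real.strictMonoOn_sin _ _ hcon
      · constructor <;> [linarith; linarith]
      · exact ⟨Real.neg_pi_div_two_le_arcsin A, Real.arcsin_le_pi_div_two A⟩
    have h2 : (0.005:ℝ) < Real.sin 0.01 := by
      have := Real.sin_gt_sub_cube (by norm_num : (0:ℝ) < 0.01)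
      nlinarith
    rw [hsinx₀] at h1
    linarith
  have hsml : Real.sin (x₀ - δ) ≤ A - δ/2 := by
    have h := sin_sub_half (show x₀ - δ ≤ x₀ by linarith)
      (by rw [abs_le]; constructor <;> nlinarith) (by rw [abs_le]; constructor <;> nlinarith)
    rw [hsinx₀] at h
    have e : (x₀ - (x₀ - δ))/2 = δ/2 := by ring
    linarith [e ▸ h]
  have hbig : A + δ/2 ≤ Real.sin (x₀ + δ) := by
    have h := sin_sub_half (show x₀ ≤ x₀ + δ by linarith)
      (by rw [abs_le]; constructor <;> nlinarith) (by rw [abs_le]; constructor <;> nlinarith)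
    rw [hsinx₀] at h
    have e : (x₀ + δ - x₀)/2 = δ/2 := by ring
    linarith [e ▸ h]
  have hcosx₀ : (1:ℝ)/2 ≤ Real.cos x₀ := by
    rw [← Real.cos_pi_div_three]
    exact Real.cos_le_cos_of_nonneg_of_le_pi hx₀0 (by linarith) (by linarith)
  have hint : ∀ a b : ℝ, IntervalIntegrable
      (fun x => Complex.exp (-Complex.I * (ph s m x : ℂ))) volume a b :=
    fun a b => (cont_F s m).intervalIntegrable a b
  have hper : Function.Periodic (fun x => Complex.exp (-Complex.I * (ph s m x : ℂ)))
      (2*Real.pi) := by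
    intro x
    simp only
    have hph : ph s m (x + 2*Real.pi) = ph s m x + (m:ℝ)*(2*Real.pi) := by
      unfold ph; rw [Real.cos_add_two_pi]; ring
    rw [hph]
    push_cast
    rw [mul_add, Complex.exp_add]
    have h1 : Complex.exp (-Complex.I * ((m:ℂ) * (2*(Real.pi:ℂ)))) = 1 := by
      have h2 := Complex.exp_int_mul_two_pi_mul_I (-m)
      rw [← h2]; congr 1; push_cast; ring
    rw [h1, mul_one]
  have hshift : (∫ x in (-Real.pi)..Real.pi, Complex.exp (-Complex.I * (ph s m x : ℂ)))
      = ∫ x in (x₀ - Real.pi/2)..(x₀ - Real.pi/2 + 2*Real.pi),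
          Complex.exp (-Complex.I * (ph s m x : ℂ)) := by
    have h1 := hper.intervalIntegral_add_eq (-Real.pi) (x₀ - Real.pi/2)
    have e1 : -Real.pi + 2*Real.pi = Real.pi := by ring
    rw [e1] at h1
    exact h1
  have hdecomp : (∫ x in (x₀ - Real.pi/2)..(x₀ - Real.pi/2 + 2*Real.pi),
        Complex.exp (-Complex.I * (ph s m x : ℂ)))
      = (∫ x in (x₀ - Real.pi/2)..(x₀ - δ), Complex.exp (-Complex.I * (ph s m x : ℂ)))
      + ((∫ x in (x₀ - δ)..(x₀ + δ), Complex.exp (-Complex.I * (ph s m x : ℂ)))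
      + ((∫ x in (x₀ + δ)..(Real.pi/2), Complex.exp (-Complex.I * (ph s m x : ℂ)))
      + ((∫ x in (Real.pi/2)..(Real.pi - x₀ - δ), Complex.exp (-Complex.I * (ph s m x : ℂ)))
      + ((∫ x in (Real.pi - x₀ - δ)..(Real.pi - x₀ + δ), Complex.exp (-Complex.I * (ph s m x : ℂ)))
      + ((∫ x in (Real.pi - x₀ + δ)..(3*Real.pi/2), Complex.exp (-Complex.I * (ph s m x : ℂ)))
      + (∫ x in (3*Real.pi/2)..(x₀ - Real.pi/2 + 2*Real.pi),
          Complex.exp (-Complex.I * (ph s m x : ℂ)))))))) := by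
    rw [intervalIntegral.integral_add_adjacent_intervals (hint _ _) (hint _ _),
        intervalIntegral.integral_add_adjacent_intervals (hint _ _) (hint _ _),
        intervalIntegral.integral_add_adjacent_intervals (hint _ _) (hint _ _),
        intervalIntegral.integral_add_adjacent_intervals (hint _ _) (hint _ _),
        intervalIntegral.integral_add_adjacent_intervals (hint _ _) (hint _ _),
        intervalIntegral.integral_add_adjacent_intervals (hint _ _) (hint _ _)]
  have B0 := pieceP1 hs0 hδpos hδ h2sA hx₀0 hx₀ hsml
  have B1 : ‖∫ x in (x₀ - δ)..(x₀ + δ),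
      Complex.exp (-Complex.I * (ph s m x : ℂ))‖ ≤ 2*δ := by
    have h := triv_bound s m (show x₀ - δ ≤ x₀ + δ by linarith)
    have e : x₀ + δ - (x₀ - δ) = 2*δ := by ring
    rw [e] at h
    exact h
  have B2 := pieceP2 hs0 hδpos hδ h2sA hx₀0 hx₀ hbig
  have B3 := pieceP3 hs0 hδpos hδ h2sA hx₀0 hx₀ hbig
  have B4 : ‖∫ x in (Real.pi - x₀ - δ)..(Real.pi - x₀ + δ),
      Complex.exp (-Complex.I * (ph s m x : ℂ))‖ ≤ 2*δ := by
    have h := triv_bound s m (show Real.pi - x₀ - δ ≤ Real.pi - x₀ + δ by linarith)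
    have e : Real.pi - x₀ + δ - (Real.pi - x₀ - δ) = 2*δ := by ring
    rw [e] at h
    exact h
  have B5 := pieceP4 hs0 hδpos hδ h2sA hx₀0 hx₀ hsml
  have B6 : ‖∫ x in (3*Real.pi/2)..(x₀ - Real.pi/2 + 2*Real.pi),
      Complex.exp (-Complex.I * (ph s m x : ℂ))‖ ≤ 4/s := by
    have e : x₀ - Real.pi/2 + 2*Real.pi = x₀ + 3*Real.pi/2 := by ring
    rw [e]
    exact pieceP5 hs0 hA0 h2sA hx₀0 hx₀ hcosx₀
  have habs : ‖∫ x in (-Real.pi)..Real.pi,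
      Complex.exp (-Complex.I * (ph s m x : ℂ))‖
      ≤ 4/(s*δ) + (2*δ + (4/(s*δ) + (4/(s*δ) + (2*δ + (4/(s*δ) + 4/s))))) := by
    rw [hshift, hdecomp]
    refine le_trans (norm_add_le _ _) (add_le_add B0 ?_)
    refine le_trans (norm_add_le _ _) (add_le_add B1 ?_)
    refine le_trans (norm_add_le _ _) (add_le_add B2 ?_)
    refine le_trans (norm_add_le _ _) (add_le_add B3 ?_)
    refine le_trans (norm_add_le _ _) (add_le_add B4 ?_)
    exact le_trans (norm_add_le _ _) (add_le_add B5 B6)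
  exact le_trans habs (oneD_tail s hs)

lemma oneD_all (s : ℝ) (hs : 0 < s) (m : ℤ) (hm : |(m:ℝ)| ≤ s/100) :
    ‖∫ x in (-Real.pi)..Real.pi, Complex.exp (-Complex.I * (ph s m x : ℂ))‖
      ≤ 630 / Real.sqrt s := by
  have hπ := Real.pi_gt_three
  have hπ' := Real.pi_lt_d2
  have hsqpos : (0:ℝ) < Real.sqrt s := Real.sqrt_pos.mpr hs
  rcases le_or_gt 10000 s with hbig | hsmall
  · have h2563 : (25:ℝ) / Real.sqrt s ≤ 630 / Real.sqrt s :=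
      (div_le_div_iff_of_pos_right hsqpos).mpr (by norm_num)
    rcases le_or_gt 0 m with hm0 | hmneg
    · have hmr : (m:ℝ) ≤ s/100 := by
        have : (0:ℝ) ≤ (m:ℝ) := by exact_mod_cast hm0
        rwa [abs_of_nonneg this] at hm
      exact le_trans (oneD_nonneg s hbig m hm0 hmr) h2563
    · have hrefl : (∫ x in (-Real.pi)..Real.pi, Complex.exp (-Complex.I * (ph s m x : ℂ)))
          = ∫ x in (-Real.pi)..Real.pi, Complex.exp (-Complex.I * (ph s (-m) x : ℂ)) := by
        have h1 : ∀ x : ℝ, ph s (-m) (-x) = ph s m x := by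
          intro x; unfold ph; rw [Real.cos_neg]; push_cast; ring
        have h2 : (∫ x in (-Real.pi)..Real.pi,
            Complex.exp (-Complex.I * (ph s (-m) (-x) : ℂ)))
            = ∫ x in (-Real.pi)..Real.pi, Complex.exp (-Complex.I * (ph s (-m) x : ℂ)) := by
          have h3 := intervalIntegral.integral_comp_neg
            (fun x => Complex.exp (-Complex.I * (ph s (-m) x : ℂ))) (a := -Real.pi) (b := Real.pi)
          rw [neg_neg] at h3
          exact h3
        rw [← h2]
        apply intervalIntegral.integral_congr
        intro x _
        simp only
        rw [h1 x]
      rw [hrefl]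
      have hm0' : 0 ≤ -m := by omega
      have hmr : ((-m : ℤ):ℝ) ≤ s/100 := by
        push_cast
        rw [abs_le] at hm
        linarith [hm.1]
      exact le_trans (oneD_nonneg s hbig (-m) hm0' hmr) h2563
  · have h := triv_bound s m (show -Real.pi ≤ Real.pi by linarith)
    have e : Real.pi - (-Real.pi) = 2*Real.pi := by ring
    rw [e] at h
    refine le_trans h ?_
    rw [le_div_iff₀ hsqpos]
    have hsq : Real.sqrt s ≤ 100 := by
      have h1 : Real.sqrt s ≤ Real.sqrt 10000 := Real.sqrt_le_sqrt (by linarith)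
      have h2 : Real.sqrt 10000 = 100 := by
        rw [show (10000:ℝ) = 100^2 by norm_num, Real.sqrt_sq (by norm_num : (0:ℝ) ≤ 100)]
      linarith
    nlinarith

/-- local dispersive bound.  There is `C > 0` depending only on `d` such
that for every `s > 0` and `m ∈ ℤ^d` with `|m| ≤ s/100`, `|K_d(s,m)| ≤ C s^{-d/2}`. -/
theorem free_kernel_dispersive_bound (d : ℕ) (hd : 2 ≤ d) :
    ∃ C : ℝ, 0 < C ∧
      ∀ s : ℝ, 0 < s → ∀ m : Fin d → ℤ, znorm m ≤ s / 100 →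
        ‖freeKernel d s m‖ ≤ C * s ^ (-(d : ℝ) / 2) := by
  have hπ := Real.pi_gt_three
  refine ⟨101^d, by positivity, ?_⟩
  intro s hs m hznorm
  have hsqpos : (0:ℝ) < Real.sqrt s := Real.sqrt_pos.mpr hs
  -- coordinatewise bounds on m
  have hmj : ∀ j, |((m j : ℤ):ℝ)| ≤ s / 100 := by
    intro j
    have h1 : ((m j:ℝ))^2 ≤ ∑ i, ((m i : ℝ))^2 :=
      Finset.single_le_sum (fun i _ => sq_nonneg ((m i : ℝ))) (Finset.mem_univ j)
    have h2 : |((m j:ℝ))| = Real.sqrt (((m j:ℝ))^2) := (Real.sqrt_sq_eq_abs _).symm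
    rw [h2]
    exact le_trans (Real.sqrt_le_sqrt h1) hznorm
  -- factor the integrand
  have hfactor : ∀ ξ : Fin d → ℝ,
      Complex.exp (-Complex.I *
        ((2 * s * ∑ j, Real.cos (ξ j) + ∑ j, (m j : ℝ) * ξ j : ℝ) : ℂ))
      = ∏ j, Complex.exp (-Complex.I * (ph s (m j) (ξ j) : ℂ)) := by
    intro ξ
    rw [← Complex.exp_sum]
    congr 1
    have h1 : (2 * s * ∑ j, Real.cos (ξ j) + ∑ j, (m j : ℝ) * ξ j)
        = ∑ j, ph s (m j) (ξ j) := by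
      unfold ph
      rw [Finset.mul_sum, ← Finset.sum_add_distrib]
    rw [h1]
    push_cast
    rw [Finset.mul_sum]
  -- from the set integral to a product of 1D integrals
  set S : Set (Fin d → ℝ) := Set.univ.pi fun _ : Fin d => Set.Icc (-Real.pi) Real.pi with hS
  have hSmeas : MeasurableSet S := MeasurableSet.univ_pi fun _ => measurableSet_Icc
  have hind : ∀ ξ : Fin d → ℝ,
      S.indicator (fun ξ => ∏ j, Complex.exp (-Complex.I * (ph s (m j) (ξ j) : ℂ))) ξ
      = ∏ j, (Set.Icc (-Real.pi) Real.pi).indicator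
          (fun x => Complex.exp (-Complex.I * (ph s (m j) x : ℂ))) (ξ j) := by
    intro ξ
    by_cases hξ : ξ ∈ S
    · rw [Set.indicator_of_mem hξ]
      rw [hS, Set.mem_univ_pi] at hξ
      apply Finset.prod_congr rfl
      intro j _
      rw [Set.indicator_of_mem (hξ j)]
    · rw [Set.indicator_of_notMem hξ]
      rw [hS, Set.mem_univ_pi] at hξ
      push_neg at hξ
      obtain ⟨j, hj⟩ := hξ
      symm
      apply Finset.prod_eq_zero (Finset.mem_univ j)
      rw [Set.indicator_of_notMem hj]
  have hsplit : (∫ ξ in S, Complex.exp (-Complex.I *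
        ((2 * s * ∑ j, Real.cos (ξ j) + ∑ j, (m j : ℝ) * ξ j : ℝ) : ℂ)))
      = ∏ j, ∫ x : ℝ, (Set.Icc (-Real.pi) Real.pi).indicator
          (fun x => Complex.exp (-Complex.I * (ph s (m j) x : ℂ))) x := by
    rw [← MeasureTheory.integral_fintype_prod_eq_prod
      (fun j x => (Set.Icc (-Real.pi) Real.pi).indicator
        (fun x => Complex.exp (-Complex.I * (ph s (m j) x : ℂ))) x)]
    rw [← MeasureTheory.integral_indicator hSmeas]
    apply MeasureTheory.integral_congr_ae
    filter_upwards with ξ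
    rw [Set.indicator_congr (fun ξ _ => hfactor ξ), hind ξ]
  have hIj : ∀ j, ‖∫ x : ℝ, (Set.Icc (-Real.pi) Real.pi).indicator
      (fun x => Complex.exp (-Complex.I * (ph s (m j) x : ℂ))) x‖ ≤ 630 / Real.sqrt s := by
    intro j
    rw [MeasureTheory.integral_indicator measurableSet_Icc,
      MeasureTheory.integral_Icc_eq_integral_Ioc,
      ← intervalIntegral.integral_of_le (by linarith : -Real.pi ≤ Real.pi)]
    exact oneD_all s hs (m j) (hmj j)
  have habsK : ‖freeKernel d s m‖ = ((2*Real.pi)^d)⁻¹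
      * ‖∫ ξ in S, Complex.exp (-Complex.I *
        ((2 * s * ∑ j, Real.cos (ξ j) + ∑ j, (m j : ℝ) * ξ j : ℝ) : ℂ))‖ := by
    unfold freeKernel
    rw [norm_smul, Real.norm_eq_abs,
      abs_of_nonneg (by positivity : (0:ℝ) ≤ ((2*Real.pi)^d)⁻¹)]
  rw [habsK, hsplit, norm_prod]
  have hprod : (∏ j : Fin d, ‖∫ x : ℝ,
      (Set.Icc (-Real.pi) Real.pi).indicator
        (fun x => Complex.exp (-Complex.I * (ph s (m j) x : ℂ))) x‖)
      ≤ (630 / Real.sqrt s)^d := by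
    have h1 := Finset.prod_le_prod (s := Finset.univ)
      (fun (j : Fin d) _ => norm_nonneg _) (fun j _ => hIj j)
    rwa [Finset.prod_const, Finset.card_univ, Fintype.card_fin] at h1
  have hsd : ((Real.sqrt s)^d)⁻¹ = s ^ (-(d:ℝ)/2) := by
    rw [Real.sqrt_eq_rpow, ← Real.rpow_natCast (s ^ ((1:ℝ)/2)) d, ← Real.rpow_mul hs.le,
      ← Real.rpow_neg hs.le]
    congr 1
    ring
  calc ((2*Real.pi)^d)⁻¹ * (∏ j : Fin d, ‖∫ x : ℝ,
        (Set.Icc (-Real.pi) Real.pi).indicator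
          (fun x => Complex.exp (-Complex.I * (ph s (m j) x : ℂ))) x‖)
      ≤ ((2*Real.pi)^d)⁻¹ * (630 / Real.sqrt s)^d := by
        apply mul_le_mul_of_nonneg_left hprod (by positivity)
    _ = (630/(2*Real.pi))^d * ((Real.sqrt s)^d)⁻¹ := by
        rw [div_pow, div_pow]
        ring
    _ ≤ 101^d * ((Real.sqrt s)^d)⁻¹ := by
        apply mul_le_mul_of_nonneg_right _ (by positivity)
        apply pow_le_pow_left₀ (by positivity)
        rw [div_le_iff₀ (by linarith : (0:ℝ) < 2*Real.pi)]
        nlinarith [Real.pi_gt_d6]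
    _ = 101^d * s ^ (-(d:ℝ)/2) := by rw [hsd]
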